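/- Let g be a positive integer and let τ be a symmetric g×g complex matrix whose imaginary part is positive definite. Then for all x, y ∈ ℂ^g the Riemann theta function satisfies the addition formula θ(x,τ)·θ(y,τ) = ∑_{ε ∈ {0,1}^g} θ̂[ε](x+y)·θ̂[ε](x−y). -/

import Mathlib

open Complex

/-- The Riemann theta function `θ(·, τ) : ℂ^g → ℂ`. -/
noncomputable def theta {g : ℕ} (τ : Matrix (Fin g) (Fin g) ℂ) (z : Fin g → ℂ) : ℂ :=
  ∑' n : Fin g → ℤ,
    Complex.exp ((Real.pi : ℂ) * Complex.I *
        (∑ i, ∑ j, (n i : ℂ) * τ i j * (n j : ℂ))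
      + 2 * (Real.pi : ℂ) * Complex.I * ∑ i, (n i : ℂ) * z i)

/-- The second-order theta function `θ̂[ε](z)`, i.e. the theta function with
characteristic `[ε; 0]` evaluated at modulus `2τ`. -/
noncomputable def thetaHat {g : ℕ} (τ : Matrix (Fin g) (Fin g) ℂ)
    (ε : Fin g → ℤ) (z : Fin g → ℂ) : ℂ :=
  ∑' n : Fin g → ℤ,
    Complex.exp (2 * (Real.pi : ℂ) * Complex.I *
        (∑ i, ∑ j, ((n i : ℂ) + (ε i : ℂ) / 2) * τ i j * ((n j : ℂ) + (ε j : ℂ) / 2))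
      + 2 * (Real.pi : ℂ) * Complex.I * ∑ i, ((n i : ℂ) + (ε i : ℂ) / 2) * z i)

/-- Componentwise parity-split equivalence `(m, n) ↦ (ε, a, b)` with
`m = a + b + ε`, `n = a - b`. -/
def thetaSplitEquiv (g : ℕ) :
    ((Fin g → ℤ) × (Fin g → ℤ)) ≃ ((Fin g → Fin 2) × ((Fin g → ℤ) × (Fin g → ℤ))) where
  toFun mn := (fun i => ⟨((mn.1 i - mn.2 i) % 2).toNat, by omega⟩,
               fun i => (mn.1 i + mn.2 i - (mn.1 i - mn.2 i) % 2) / 2,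
               fun i => (mn.1 i - mn.2 i - (mn.1 i - mn.2 i) % 2) / 2)
  invFun w := (fun i => w.2.1 i + w.2.2 i + ((w.1 i : ℕ) : ℤ), fun i => w.2.1 i - w.2.2 i)
  left_inv mn := by
    refine Prod.ext (funext fun i => ?_) (funext fun i => ?_) <;> simp only <;> omega
  right_inv w := by
    refine Prod.ext (funext fun i => ?_) (Prod.ext (funext fun i => ?_) (funext fun i => ?_)) <;>
      simp only
    · have h2 : (w.1 i : ℕ) < 2 := (w.1 i).isLt
      apply Fin.ext
      simp only [Fin.val_mk]
      omega
    · have h2 : (w.1 i : ℕ) < 2 := (w.1 i).isLt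
      omega
    · have h2 : (w.1 i : ℕ) < 2 := (w.1 i).isLt
      omega

lemma theta_summable_pi_prod : ∀ (g : ℕ) (h : Fin g → ℤ → ℝ), (∀ i, Summable (h i)) →
    (∀ i k, 0 ≤ h i k) → Summable (fun n : Fin g → ℤ => ∏ i, h i (n i))
  | 0, h, _, _ => by
      simp only [Finset.univ_eq_empty, Finset.prod_empty]
      exact (hasSum_single (α := ℝ) default
        (fun b hb => absurd (Subsingleton.elim b default) hb)).summable
  | (g+1), h, hs, hn => by
      have ih := theta_summable_pi_prod g (fun i => h i.succ) (fun i => hs i.succ)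
        (fun i k => hn i.succ k)
      have h0 := (hs 0).mul_of_nonneg ih (fun k => hn 0 k)
        (fun n => Finset.prod_nonneg fun i _ => hn i.succ (n i))
      have := ((Fin.consEquiv (fun _ : Fin (g+1) => ℤ)).summable_iff
        (f := fun n : Fin (g+1) → ℤ => ∏ i, h i (n i))).mp ?_
      · exact this
      · refine h0.congr fun p => ?_
        simp [Function.comp, Fin.prod_univ_succ, Fin.consEquiv]

lemma theta_coercive {g : ℕ} (hg : 0 < g) (A : Matrix (Fin g) (Fin g) ℝ) (hA : A.PosDef) :
    ∃ c > 0, ∀ v : Fin g → ℝ, c * ∑ i, v i ^ 2 ≤ ∑ i, ∑ j, v i * A i j * v j := by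
  set φ : (Fin g → ℝ) → ℝ := fun v => ∑ i, ∑ j, v i * A i j * v j with hφ
  have hφcont : Continuous φ := by
    apply continuous_finset_sum; intro i _
    apply continuous_finset_sum; intro j _
    exact ((continuous_apply i).mul continuous_const).mul (continuous_apply j)
  have hφpos : ∀ v : Fin g → ℝ, v ≠ 0 → 0 < φ v := by
    intro v hv
    have := hA.dotProduct_mulVec_pos hv
    simpa [dotProduct, Matrix.mulVec, Finset.mul_sum, mul_assoc, mul_comm,
      mul_left_comm, φ] using this
  have hom : ∀ (s : ℝ) (v : Fin g → ℝ), φ (s • v) = s ^ 2 * φ v := by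
    intro s v
    simp only [hφ, Finset.mul_sum]
    refine Finset.sum_congr rfl fun i _ => Finset.sum_congr rfl fun j _ => ?_
    simp only [Pi.smul_apply, smul_eq_mul]; ring
  set S : Set (Fin g → ℝ) := {v | ∑ i, v i ^ 2 = 1} with hS
  have hScl : IsClosed S := isClosed_eq (by fun_prop) continuous_const
  have hSbd : Bornology.IsBounded S := by
    rw [Metric.isBounded_iff_subset_closedBall 0]
    refine ⟨1, fun v hv => ?_⟩
    simp only [Metric.mem_closedBall, dist_zero_right]
    rw [pi_norm_le_iff_of_nonneg zero_le_one]
    intro i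
    have h1 : v i ^ 2 ≤ 1 := by
      have := Finset.single_le_sum (f := fun i => v i ^ 2)
        (fun i _ => sq_nonneg (v i)) (Finset.mem_univ i)
      rw [hv] at this; exact this
    rw [Real.norm_eq_abs]
    nlinarith [abs_nonneg (v i), _root_.sq_abs (v i)]
  have hScpt : IsCompact S := Metric.isCompact_of_isClosed_isBounded hScl hSbd
  have hSne : S.Nonempty := by
    refine ⟨fun i => if i = ⟨0, hg⟩ then 1 else 0, ?_⟩
    simp [hS, Finset.sum_ite_eq']
  obtain ⟨v0, hv0S, hmin⟩ := hScpt.exists_isMinOn hSne hφcont.continuousOn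
  have hv0ne : v0 ≠ 0 := by
    intro h; rw [hS] at hv0S; simp [h] at hv0S
  refine ⟨φ v0, hφpos v0 hv0ne, fun v => ?_⟩
  rcases eq_or_ne v 0 with rfl | hv
  · simp [φ]
  · have hsum : 0 < ∑ i, v i ^ 2 := by
      obtain ⟨i, hi⟩ := Function.ne_iff.mp hv
      exact Finset.sum_pos' (fun j _ => sq_nonneg _)
        ⟨i, Finset.mem_univ i, by have : v i ≠ 0 := hi; positivity⟩
    set r := Real.sqrt (∑ i, v i ^ 2) with hr
    have hrpos : 0 < r := Real.sqrt_pos.mpr hsum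
    have hr2 : r ^ 2 = ∑ i, v i ^ 2 := Real.sq_sqrt hsum.le
    have hwS : (r⁻¹ • v) ∈ S := by
      simp only [hS, Set.mem_setOf_eq]
      have : ∑ i, (r⁻¹ • v) i ^ 2 = r⁻¹ ^ 2 * ∑ i, v i ^ 2 := by
        rw [Finset.mul_sum]
        refine Finset.sum_congr rfl fun i _ => ?_
        simp [Pi.smul_apply, smul_eq_mul]; ring
      rw [this, hr2.symm]
      field_simp
    have := hmin hwS
    have hhom := hom r⁻¹ v
    calc φ v0 * ∑ i, v i ^ 2 ≤ φ (r⁻¹ • v) * ∑ i, v i ^ 2 := by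
          exact mul_le_mul_of_nonneg_right this hsum.le
      _ = (r⁻¹ ^ 2 * φ v) * (r ^ 2) := by rw [hhom, hr2]
      _ = φ v := by field_simp

lemma re_theta_exponent {g : ℕ} (τ : Matrix (Fin g) (Fin g) ℂ) (z : Fin g → ℂ)
    (n : Fin g → ℤ) :
    ((Real.pi : ℂ) * Complex.I * (∑ i, ∑ j, (n i : ℂ) * τ i j * (n j : ℂ))
      + 2 * (Real.pi : ℂ) * Complex.I * ∑ i, (n i : ℂ) * z i).re
    = -Real.pi * (∑ i, ∑ j, (n i : ℝ) * (τ i j).im * (n j : ℝ))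
      - 2 * Real.pi * ∑ i, (n i : ℝ) * (z i).im := by
  simp only [Complex.add_re, Complex.mul_re, Complex.mul_im, Complex.I_re, Complex.I_im,
    Complex.ofReal_re, Complex.ofReal_im, Complex.re_sum, Complex.im_sum,
    Complex.intCast_re, Complex.intCast_im, Complex.re_ofNat, Complex.im_ofNat,
    zero_mul, mul_zero, add_zero, zero_add, sub_zero]
  ring_nf

lemma summable_theta_term {g : ℕ} (hg : 0 < g) (τ : Matrix (Fin g) (Fin g) ℂ)
    (hpos : (Matrix.of fun i j => (τ i j).im).PosDef) (z : Fin g → ℂ) :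
    Summable (fun n : Fin g → ℤ =>
      Complex.exp ((Real.pi : ℂ) * Complex.I * (∑ i, ∑ j, (n i : ℂ) * τ i j * (n j : ℂ))
        + 2 * (Real.pi : ℂ) * Complex.I * ∑ i, (n i : ℂ) * z i)) := by
  obtain ⟨c, hc, hcoer⟩ := theta_coercive hg _ hpos
  set h : Fin g → ℤ → ℝ := fun i k => ‖jacobiTheta₂_term k (z i) (Complex.I * c)‖ with hh
  have hsum : ∀ i, Summable (h i) := by
    intro i
    refine (summable_norm_iff.mpr ?_)
    exact (summable_jacobiTheta₂_term_iff (z i) (Complex.I * c)).mpr (by simpa using hc)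
  have hbound : ∀ n : Fin g → ℤ,
      ‖Complex.exp ((Real.pi : ℂ) * Complex.I * (∑ i, ∑ j, (n i : ℂ) * τ i j * (n j : ℂ))
        + 2 * (Real.pi : ℂ) * Complex.I * ∑ i, (n i : ℂ) * z i)‖ ≤ ∏ i, h i (n i) := by
    intro n
    rw [Complex.norm_exp, re_theta_exponent]
    have h1 : c * ∑ i, ((n i : ℝ)) ^ 2 ≤ ∑ i, ∑ j, (n i : ℝ) * (τ i j).im * (n j : ℝ) := by
      have := hcoer (fun i => (n i : ℝ))
      simpa using this
    have h2 : ∏ i, h i (n i)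
        = Real.exp (∑ i, (-Real.pi * (n i : ℝ) ^ 2 * c - 2 * Real.pi * (n i : ℝ) * (z i).im)) := by
      rw [Real.exp_sum]
      refine Finset.prod_congr rfl fun i _ => ?_
      show ‖jacobiTheta₂_term (n i) (z i) (Complex.I * c)‖ = _
      rw [norm_jacobiTheta₂_term]
      norm_num
    rw [h2, Real.exp_le_exp]
    have h3 : ∑ i, (-Real.pi * (n i : ℝ) ^ 2 * c - 2 * Real.pi * (n i : ℝ) * (z i).im)
        = -Real.pi * (c * ∑ i, ((n i : ℝ)) ^ 2) - 2 * Real.pi * ∑ i, (n i : ℝ) * (z i).im := by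
      rw [Finset.sum_sub_distrib, Finset.mul_sum, Finset.mul_sum, Finset.mul_sum]
      congr 1
      · refine Finset.sum_congr rfl fun i _ => by ring
      · refine Finset.sum_congr rfl fun i _ => by ring
    rw [h3]
    have := mul_le_mul_of_nonneg_left h1 Real.pi_pos.le
    linarith
  refine Summable.of_norm (Summable.of_nonneg_of_le (fun n => norm_nonneg _) hbound ?_)
  exact theta_summable_pi_prod g h hsum (fun i k => norm_nonneg _)

/-- The addition formula for the Riemann theta function:
`θ(x,τ)·θ(y,τ) = ∑_{ε ∈ {0,1}^g} θ̂[ε](x+y)·θ̂[ε](x−y)`. -/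
theorem theta_addition_formula (g : ℕ) (hg : 0 < g)
    (τ : Matrix (Fin g) (Fin g) ℂ) (hsym : τ.IsSymm)
    (hpos : (Matrix.of fun i j => (τ i j).im).PosDef)
    (x y : Fin g → ℂ) :
    theta τ x * theta τ y =
      ∑ ε : Fin g → Fin 2,
        thetaHat τ (fun i => ((ε i : ℕ) : ℤ)) (fun i => x i + y i) *
          thetaHat τ (fun i => ((ε i : ℕ) : ℤ)) (fun i => x i - y i) := by
  classical
  set f : (Fin g → ℂ) → (Fin g → ℤ) → ℂ := fun z n =>
    Complex.exp ((Real.pi : ℂ) * Complex.I * (∑ i, ∑ j, (n i : ℂ) * τ i j * (n j : ℂ))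
      + 2 * (Real.pi : ℂ) * Complex.I * ∑ i, (n i : ℂ) * z i) with hf
  set T : (Fin g → ℂ) → (Fin g → Fin 2) → (Fin g → ℤ) → ℂ := fun z ε n =>
    Complex.exp (2 * (Real.pi : ℂ) * Complex.I *
        (∑ i, ∑ j, ((n i : ℂ) + ((((ε i : ℕ) : ℤ)) : ℂ) / 2) * τ i j *
          ((n j : ℂ) + ((((ε j : ℕ) : ℤ)) : ℂ) / 2))
      + 2 * (Real.pi : ℂ) * Complex.I *
        ∑ i, ((n i : ℂ) + ((((ε i : ℕ) : ℤ)) : ℂ) / 2) * z i) with hT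
  have hsx : Summable (f x) := summable_theta_term hg τ hpos x
  have hsy : Summable (f y) := summable_theta_term hg τ hpos y
  have hprod : Summable (fun mn : (Fin g → ℤ) × (Fin g → ℤ) => f x mn.1 * f y mn.2) :=
    summable_mul_of_summable_norm (summable_norm_iff.mpr hsx) (summable_norm_iff.mpr hsy)
  -- key pointwise identity
  have key : ∀ (ε : Fin g → Fin 2) (a b : Fin g → ℤ),
      f x (fun i => a i + b i + ((ε i : ℕ) : ℤ)) * f y (fun i => a i - b i)
        = T (fun i => x i + y i) ε a * T (fun i => x i - y i) ε b := by
    intro ε a b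
    rw [hf, hT]
    simp only
    rw [← Complex.exp_add, ← Complex.exp_add]
    congr 1
    have hQ : (∑ i, ∑ j, ((((a i + b i + ((ε i : ℕ) : ℤ)) : ℤ) : ℂ)) * τ i j *
                ((((a j + b j + ((ε j : ℕ) : ℤ)) : ℤ) : ℂ)))
            + (∑ i, ∑ j, ((((a i - b i) : ℤ) : ℂ)) * τ i j * ((((a j - b j) : ℤ) : ℂ)))
        = 2 * (∑ i, ∑ j, ((a i : ℂ) + ((((ε i : ℕ) : ℤ)) : ℂ) / 2) * τ i j *
                ((a j : ℂ) + ((((ε j : ℕ) : ℤ)) : ℂ) / 2))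
        + 2 * (∑ i, ∑ j, ((b i : ℂ) + ((((ε i : ℕ) : ℤ)) : ℂ) / 2) * τ i j *
                ((b j : ℂ) + ((((ε j : ℕ) : ℤ)) : ℂ) / 2)) := by
      rw [Finset.mul_sum, Finset.mul_sum, ← Finset.sum_add_distrib, ← Finset.sum_add_distrib]
      refine Finset.sum_congr rfl fun i _ => ?_
      rw [Finset.mul_sum, Finset.mul_sum, ← Finset.sum_add_distrib, ← Finset.sum_add_distrib]
      refine Finset.sum_congr rfl fun j _ => ?_
      push_cast
      ring
    have hL : (∑ i, ((((a i + b i + ((ε i : ℕ) : ℤ)) : ℤ) : ℂ)) * x i)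
            + (∑ i, ((((a i - b i) : ℤ) : ℂ)) * y i)
        = (∑ i, ((a i : ℂ) + ((((ε i : ℕ) : ℤ)) : ℂ) / 2) * (x i + y i))
        + (∑ i, ((b i : ℂ) + ((((ε i : ℕ) : ℤ)) : ℂ) / 2) * (x i - y i)) := by
      rw [← Finset.sum_add_distrib, ← Finset.sum_add_distrib]
      refine Finset.sum_congr rfl fun i _ => ?_
      push_cast
      ring
    linear_combination ((Real.pi : ℂ) * Complex.I) * hQ
      + 2 * (Real.pi : ℂ) * Complex.I * hL
  -- assemble
  have step1 : theta τ x * theta τ y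
      = ∑' mn : (Fin g → ℤ) × (Fin g → ℤ), f x mn.1 * f y mn.2 :=
    Summable.tsum_mul_tsum hsx hsy hprod
  have step2 : (∑' mn : (Fin g → ℤ) × (Fin g → ℤ), f x mn.1 * f y mn.2)
      = ∑' w : (Fin g → Fin 2) × ((Fin g → ℤ) × (Fin g → ℤ)),
          T (fun i => x i + y i) w.1 w.2.1 * T (fun i => x i - y i) w.1 w.2.2 := by
    rw [← ((thetaSplitEquiv g).symm.tsum_eq
      (fun mn : (Fin g → ℤ) × (Fin g → ℤ) => f x mn.1 * f y mn.2))]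
    exact tsum_congr fun w => key w.1 w.2.1 w.2.2
  have hG : Summable (fun w : (Fin g → Fin 2) × ((Fin g → ℤ) × (Fin g → ℤ)) =>
      T (fun i => x i + y i) w.1 w.2.1 * T (fun i => x i - y i) w.1 w.2.2) := by
    have := ((thetaSplitEquiv g).symm.summable_iff
      (f := fun mn : (Fin g → ℤ) × (Fin g → ℤ) => f x mn.1 * f y mn.2)).mpr hprod
    exact this.congr fun w => key w.1 w.2.1 w.2.2
  rw [step1, step2, Summable.tsum_prod hG, tsum_fintype]
  refine Finset.sum_congr rfl fun ε _ => ?_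
  have hfac : Summable (fun ab : (Fin g → ℤ) × (Fin g → ℤ) =>
      T (fun i => x i + y i) ε ab.1 * T (fun i => x i - y i) ε ab.2) := hG.prod_factor ε
  have hne1 : T (fun i => x i - y i) ε 0 ≠ 0 := Complex.exp_ne_zero _
  have hne2 : T (fun i => x i + y i) ε 0 ≠ 0 := Complex.exp_ne_zero _
  have hT1 : Summable (T (fun i => x i + y i) ε) := by
    have hinj : Function.Injective (fun a : Fin g → ℤ => (a, (0 : Fin g → ℤ))) :=
      fun a b h => (Prod.mk.injEq _ _ _ _).mp h |>.1
    have := hfac.comp_injective hinj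
    refine (this.mul_right ((T (fun i => x i - y i) ε 0)⁻¹)).congr fun a => ?_
    simp only [Function.comp]
    field_simp
  have hT2 : Summable (T (fun i => x i - y i) ε) := by
    have hinj : Function.Injective (fun b : Fin g → ℤ => ((0 : Fin g → ℤ), b)) :=
      fun a b h => (Prod.mk.injEq _ _ _ _).mp h |>.2
    have := hfac.comp_injective hinj
    refine (this.mul_left ((T (fun i => x i + y i) ε 0)⁻¹)).congr fun b => ?_
    simp only [Function.comp]
    field_simp
  have := (Summable.tsum_mul_tsum hT1 hT2 hfac).symm
  exact this
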